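/- Let μ be the Gibbs distribution of a spin system on a graph G=(V,E), let V_1,…,V_k be disjoint independent sets with V = V_1 ∪ ⋯ ∪ V_k, let S ⊆ V, and let S_1,…,S_m be the connected components of the subgraph induced by S. For each S_i, let Γ(S_i) be the minimum value such that for every pinning τ on V∖S_i and every function g : Ω^τ_{S_i} → R_{≥0}, Ent^τ_{S_i}(g) ≤ Γ(S_i) Σ_{j=1}^{k} E_{ξ∼μ^τ_{S_i∖V_j}}[ Ent^{ξ∪τ}_{V_j∩S_i}( g^{ξ}_{S_i∩V_j} ) ]. Then for every function f : Ω → R_{≥0}, E_{τ∼μ_{V∖S}}[ Ent^τ_S(f^τ) ] ≤ ( max_{S_i ⊆ S} Γ(S_i) ) · Σ_{j=1}^{k} E_{τ∼μ_{V∖V_j}}[ Ent^τ_{V_j}(f^τ) ]. -/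

import Mathlib

open Finset

attribute [local instance] Classical.propDecidable

noncomputable section

namespace SpinGraph

/-- Spin configurations: assignments of one of `q` spins to each vertex. -/
abbrev Conf (V : Type*) (q : ℕ) := V → Fin q

variable {V : Type*} [Fintype V] [DecidableEq V] {q : ℕ}

/-- `μ` is a probability distribution on configurations. -/
def IsDist (μ : Conf V q → ℝ) : Prop :=
  (∀ σ, 0 ≤ μ σ) ∧ ∑ σ : Conf V q, μ σ = 1

/-- Probability (under `μ`) of agreeing with `τ` on `Λ`. -/
def agreeProb (μ : Conf V q → ℝ) (Λ : Finset V) (τ : Conf V q) : ℝ :=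
  ∑ σ ∈ univ.filter (fun σ : Conf V q => ∀ v ∈ Λ, σ v = τ v), μ σ

/-- Conditional probability of the event `E` given the pinning `τ` on `Λ`. -/
def condProb (μ : Conf V q → ℝ) (Λ : Finset V) (τ : Conf V q) (E : Conf V q → Prop) : ℝ :=
  (∑ σ ∈ univ.filter (fun σ : Conf V q => E σ ∧ ∀ v ∈ Λ, σ v = τ v), μ σ) / agreeProb μ Λ τ

/-- The conditional distribution given the pinning `τ` on `Λ`. -/
def condDist (μ : Conf V q → ℝ) (Λ : Finset V) (τ : Conf V q) : Conf V q → ℝ :=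
  fun σ => if ∀ v ∈ Λ, σ v = τ v then μ σ / agreeProb μ Λ τ else 0

/-- `μ` is `b`-marginally bounded. -/
def MargBounded (b : ℝ) (μ : Conf V q → ℝ) : Prop :=
  ∀ (Λ : Finset V) (τ : Conf V q), 0 < agreeProb μ Λ τ →
    ∀ v, v ∉ Λ → ∀ s : Fin q,
      0 < condProb μ Λ τ (fun σ => σ v = s) → b ≤ condProb μ Λ τ (fun σ => σ v = s)

/-- Vertex-spin pairs consistent with the pinning `τ` on `Λ`. -/
def Pairs (μ : Conf V q → ℝ) (Λ : Finset V) (τ : Conf V q) : Type _ :=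
  {p : V × Fin q // p.1 ∉ Λ ∧ 0 < condProb μ Λ τ (fun σ => σ p.1 = p.2)}

instance (μ : Conf V q → ℝ) (Λ : Finset V) (τ : Conf V q) : Finite (Pairs μ Λ τ) := by
  unfold Pairs; infer_instance

noncomputable instance (μ : Conf V q → ℝ) (Λ : Finset V) (τ : Conf V q) :
    Fintype (Pairs μ Λ τ) := Fintype.ofFinite _

/-- The signed pairwise influence matrix associated with the pinning `τ` on `Λ`. -/
def influence (μ : Conf V q → ℝ) (Λ : Finset V) (τ : Conf V q) :
    Matrix (Pairs μ Λ τ) (Pairs μ Λ τ) ℝ :=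
  fun p r =>
    if p.1.1 = r.1.1 then 0
    else
      condProb μ (insert p.1.1 Λ) (Function.update τ p.1.1 p.1.2)
          (fun σ => σ r.1.1 = r.1.2) -
        condProb μ Λ τ (fun σ => σ r.1.1 = r.1.2)

/-- `μ` is `η`-spectrally independent: for every pinning, every (real) eigenvalue of the
signed pairwise influence matrix is at most `η`. -/
def SpecInd (η : ℝ) (μ : Conf V q → ℝ) : Prop :=
  ∀ (Λ : Finset V) (τ : Conf V q), 0 < agreeProb μ Λ τ →
    ∀ (lam : ℝ) (x : Pairs μ Λ τ → ℝ), x ≠ 0 →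
      (influence μ Λ τ).mulVec x = lam • x → lam ≤ η

/-- Two configurations differ at exactly one vertex. -/
def differOne (σ σ' : Conf V q) : Prop :=
  ∃ v, σ v ≠ σ' v ∧ ∀ w, w ≠ v → σ w = σ' w

/-- `μ` is totally-connected: for every pinning, the set of consistent configurations is
connected under single-site moves. -/
def TotallyConnected (μ : Conf V q → ℝ) : Prop :=
  ∀ (Λ : Finset V) (τ : Conf V q), 0 < agreeProb μ Λ τ →
    ∀ σ₁ σ₂ : Conf V q,
      0 < μ σ₁ → (∀ v ∈ Λ, σ₁ v = τ v) → 0 < μ σ₂ → (∀ v ∈ Λ, σ₂ v = τ v) →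
      Relation.ReflTransGen
        (fun a b =>
          0 < μ a ∧ 0 < μ b ∧ (∀ v ∈ Λ, a v = τ v) ∧ (∀ v ∈ Λ, b v = τ v) ∧ differOne a b)
        σ₁ σ₂

/-- `μ` is the Gibbs distribution of a spin system on `G`, built from symmetric
(nonnegative) edge potentials and vertex potentials. -/
def IsGibbs (G : SimpleGraph V) (μ : Conf V q → ℝ) : Prop :=
  ∃ (ψ : V → V → Fin q → Fin q → ℝ) (φ : V → Fin q → ℝ),
    (∀ u v a b, 0 ≤ ψ u v a b) ∧
    (∀ u v a b, ψ u v a b = ψ v u b a) ∧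
    (∀ v a, 0 ≤ φ v a) ∧
    ∀ σ,
      μ σ =
        ((∏ v, φ v (σ v)) *
            ∏ p ∈ univ.filter (fun p : V × V => G.Adj p.1 p.2), ψ p.1 p.2 (σ p.1) (σ p.2)) /
          ∑ σ' : Conf V q,
            (∏ v, φ v (σ' v)) *
              ∏ p ∈ univ.filter (fun p : V × V => G.Adj p.1 p.2), ψ p.1 p.2 (σ' p.1) (σ' p.2)

/-- Mean of `f` under `μ`. -/
def mean {C : Type*} [Fintype C] (μ f : C → ℝ) : ℝ := ∑ x, μ x * f x

/-- Entropy functional `Ent_μ(f) = E_μ[f log f] - E_μ[f] log E_μ[f]`. -/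
def ent {C : Type*} [Fintype C] (μ f : C → ℝ) : ℝ :=
  (∑ x, μ x * f x * Real.log (f x)) - mean μ f * Real.log (mean μ f)

/-- Variance of `f` under `μ`. -/
def varFn {C : Type*} [Fintype C] (μ f : C → ℝ) : ℝ :=
  ∑ x, μ x * (f x - mean μ f) ^ 2

/-- Dirichlet form of the reversible chain `P` with stationary distribution `μ`. -/
def dirichlet {C : Type*} [Fintype C] (P : Matrix C C ℝ) (μ f g : C → ℝ) : ℝ :=
  (∑ x, ∑ y, μ x * P x y * (f x - f y) * (g x - g y)) / 2

/-- Total variation distance between two distributions. -/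
def tvDist {C : Type*} [Fintype C] (p r : C → ℝ) : ℝ := (∑ x, |p x - r x|) / 2

/-- Mixing time: least `t` with worst-case total variation distance at most `1/4`. -/
def mixingTime {C : Type*} [Fintype C] (P : Matrix C C ℝ) (μ : C → ℝ) : ℕ :=
  sInf {t : ℕ | ∀ x : C, tvDist (fun y => (P ^ t) x y) μ ≤ 1 / 4}

/-- `E_{τ ∼ μ_{V∖U}}[Ent^τ_U (f^τ)]`: the expected conditional entropy of `f` on the
block `U`, over a pinning of `V ∖ U` drawn from the marginal of `μ`. -/
def blockEnt (μ : Conf V q → ℝ) (U : Finset V) (f : Conf V q → ℝ) : ℝ :=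
  ∑ τ : Conf V q, μ τ * ent (condDist μ Uᶜ τ) f

/-- `G` has maximum degree at most `Δ`. -/
def degLE (G : SimpleGraph V) (Δ : ℕ) : Prop :=
  ∀ v, (univ.filter (fun w => G.Adj v w)).card ≤ Δ

/-- `U` is an independent set of `G`. -/
def IndepSet (G : SimpleGraph V) (U : Finset V) : Prop :=
  ∀ u ∈ U, ∀ v ∈ U, ¬G.Adj u v

/-- The support of `μ`. -/
def Supp (μ : Conf V q → ℝ) : Type _ := {σ : Conf V q // 0 < μ σ}

instance (μ : Conf V q → ℝ) : Finite (Supp μ) := by unfold Supp; infer_instance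

noncomputable instance (μ : Conf V q → ℝ) : Fintype (Supp μ) := Fintype.ofFinite _

/-- `μ` as a distribution on its support. -/
def suppDist (μ : Conf V q → ℝ) : Supp μ → ℝ := fun σ => μ σ.1

/-- Heat-bath update at the vertex `v` (on the support of `μ`). -/
def siteUpdate (μ : Conf V q → ℝ) (v : V) : Matrix (Supp μ) (Supp μ) ℝ :=
  fun σ σ' =>
    if ∀ w, w ≠ v → σ.1 w = σ'.1 w then
      μ σ'.1 / ∑ a : Fin q, μ (Function.update σ.1 v a)
    else 0

/-- The symmetrized systematic scan dynamics for the ordering `l`: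
update the vertices in the order `l`, then in the reverse order. -/
def scanMatrix (μ : Conf V q → ℝ) (l : List V) : Matrix (Supp μ) (Supp μ) ℝ :=
  (l.map (siteUpdate μ)).prod * (l.reverse.map (siteUpdate μ)).prod

/-- `l` is an ordering of the vertices. -/
def IsOrdering (l : List V) : Prop := l.Nodup ∧ ∀ v : V, v ∈ l

/-- The spin system is monotone: there are linear orders of the spins at each vertex
(encoded by relabelling permutations) such that conditional distributions given larger
pinnings stochastically dominate those given smaller pinnings. -/
def MonotoneSystem (μ : Conf V q → ℝ) : Prop :=
  ∃ e : V → Equiv.Perm (Fin q),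
    ∀ (Λ : Finset V) (τ₁ τ₂ : Conf V q),
      0 < agreeProb μ Λ τ₁ → 0 < agreeProb μ Λ τ₂ →
      (∀ v ∈ Λ, e v (τ₂ v) ≤ e v (τ₁ v)) →
      ∀ f : Conf V q → ℝ,
        (∀ σ σ' : Conf V q, (∀ v, e v (σ v) ≤ e v (σ' v)) → f σ ≤ f σ') →
        mean (condDist μ Λ τ₂) f ≤ mean (condDist μ Λ τ₁) f

/-- Heat-bath update on the block `B` (on the support of `μ`). -/
def blockUpdate (μ : Conf V q → ℝ) (B : Finset V) : Matrix (Supp μ) (Supp μ) ℝ :=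
  fun σ σ' =>
    if ∀ w, w ∉ B → σ.1 w = σ'.1 w then
      μ σ'.1 / ∑ ρ ∈ univ.filter (fun ρ : Conf V q => ∀ w, w ∉ B → ρ w = σ.1 w), μ ρ
    else 0

/-- Heat-bath update on the block `B` (on the full configuration space). -/
def blockUpdateFull (μ : Conf V q → ℝ) (B : Finset V) : Matrix (Conf V q) (Conf V q) ℝ :=
  fun σ σ' =>
    if ∀ w, w ∉ B → σ w = σ' w then
      μ σ' / ∑ ρ ∈ univ.filter (fun ρ : Conf V q => ∀ w, w ∉ B → ρ w = σ w), μ ρ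
    else 0

/-- The (heat-bath) Glauber dynamics for `μ`. -/
def glauber (μ : Conf V q → ℝ) : Matrix (Supp μ) (Supp μ) ℝ :=
  fun σ σ' =>
    (Fintype.card V : ℝ)⁻¹ *
      ∑ v : V,
        if ∀ w, w ≠ v → σ.1 w = σ'.1 w then
          μ σ'.1 / ∑ a : Fin q, μ (Function.update σ.1 v a)
        else 0

/-- The set of monochromatic edges of `G` in the configuration `σ`. -/
def monoEdges (G : SimpleGraph V) (σ : Conf V q) : Finset (Sym2 V) :=
  univ.filter (fun e : Sym2 V => e ∈ G.edgeSet ∧ ∀ u v : V, s(u, v) = e → σ u = σ v)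

/-- The Gibbs distribution of the `q`-state ferromagnetic Potts model on `G` with
parameter `β` (the Ising model is the case `q = 2`). -/
def pottsDist (G : SimpleGraph V) (q : ℕ) (β : ℝ) : Conf V q → ℝ :=
  fun σ =>
    Real.exp (β * (monoEdges G σ).card) /
      ∑ σ' : Conf V q, Real.exp (β * (monoEdges G σ').card)

/-- The transition matrix of the Swendsen–Wang dynamics for the `q`-state ferromagnetic
Potts model on `G` with parameter `β` (percolation parameter `p = 1 - e^{-β}`). -/
def swMatrix (G : SimpleGraph V) (q : ℕ) (β : ℝ) : Matrix (Conf V q) (Conf V q) ℝ :=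
  fun σ σ' =>
    ∑ A ∈ (monoEdges G σ).powerset,
      (1 - Real.exp (-β)) ^ A.card * Real.exp (-β) ^ ((monoEdges G σ).card - A.card) *
        if ∀ u v : V, (SimpleGraph.fromEdgeSet (A : Set (Sym2 V))).Reachable u v → σ' u = σ' v
        then
          ((q : ℝ))⁻¹ ^ Nat.card (SimpleGraph.fromEdgeSet (A : Set (Sym2 V))).ConnectedComponent
        else 0

end SpinGraph

open SpinGraph

/-- `T` is connected inside itself in `G`. -/
def ConnWithin {V : Type*} (G : SimpleGraph V) (T : Finset V) : Prop :=
  ∀ u ∈ T, ∀ v ∈ T,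
    Relation.ReflTransGen (fun a b => a ∈ T ∧ b ∈ T ∧ G.Adj a b) u v

/-- `T` is a connected component of the subgraph of `G` induced by `S`. -/
def IsComponent {V : Type*} (G : SimpleGraph V) (S T : Finset V) : Prop :=
  T ⊆ S ∧ T.Nonempty ∧ ConnWithin G T ∧ ∀ u ∈ T, ∀ v ∈ S, G.Adj u v → v ∈ T

namespace CompFact
open SpinGraph

variable {V : Type*} [Fintype V] [DecidableEq V] {q : ℕ}

/-- agreement class -/
def cls (W : Finset V) (τ : Conf V q) : Finset (Conf V q) :=
  univ.filter (fun σ => ∀ v ∈ W, σ v = τ v)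

lemma mem_cls {W : Finset V} {τ σ : Conf V q} : σ ∈ cls W τ ↔ ∀ v ∈ W, σ v = τ v := by
  simp [cls]

variable (μ : Conf V q → ℝ)

lemma agree_eq (W : Finset V) (τ : Conf V q) :
    agreeProb μ W τ = ∑ σ ∈ cls W τ, μ σ := rfl

lemma sum_ite_cls (W : Finset V) (τ : Conf V q) (F : Conf V q → ℝ) :
    (∑ σ : Conf V q, if (∀ v ∈ W, σ v = τ v) then F σ else 0) = ∑ σ ∈ cls W τ, F σ := by
  rw [cls, Finset.sum_filter]

lemma condDist_apply (W : Finset V) (τ σ : Conf V q) :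
    condDist μ W τ σ = if (∀ v ∈ W, σ v = τ v) then μ σ / agreeProb μ W τ else 0 := rfl

lemma agree_nonneg (h0 : ∀ σ, 0 ≤ μ σ) (W : Finset V) (τ : Conf V q) : 0 ≤ agreeProb μ W τ :=
  Finset.sum_nonneg fun _ _ => h0 _

lemma self_mem_cls (W : Finset V) (τ : Conf V q) : τ ∈ cls W τ :=
  mem_cls.2 fun _ _ => rfl

lemma le_agree (h0 : ∀ σ, 0 ≤ μ σ) (W : Finset V) (τ : Conf V q) : μ τ ≤ agreeProb μ W τ :=
  Finset.single_le_sum (fun σ _ => h0 σ) (self_mem_cls W τ)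

lemma agree_pos (h0 : ∀ σ, 0 ≤ μ σ) {τ : Conf V q} (W : Finset V) (hτ : 0 < μ τ) : 0 < agreeProb μ W τ :=
  lt_of_lt_of_le hτ (le_agree μ h0 W τ)

lemma cls_congr {W : Finset V} {τ τ' : Conf V q} (h : ∀ v ∈ W, τ v = τ' v) :
    cls W τ = cls W τ' := by
  ext σ; simp only [mem_cls]
  constructor <;> intro hσ v hv
  · rw [hσ v hv, h v hv]
  · rw [hσ v hv, h v hv]

lemma agree_congr {W : Finset V} {τ τ' : Conf V q} (h : ∀ v ∈ W, τ v = τ' v) :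
    agreeProb μ W τ = agreeProb μ W τ' := by
  rw [agree_eq, agree_eq, cls_congr h]

lemma cond_congr {W : Finset V} {τ τ' : Conf V q} (h : ∀ v ∈ W, τ v = τ' v) :
    condDist μ W τ = condDist μ W τ' := by
  funext σ
  rw [condDist_apply, condDist_apply, agree_congr μ h]
  refine if_congr ?_ rfl rfl
  constructor <;> intro hσ v hv
  · rw [hσ v hv, h v hv]
  · rw [hσ v hv, h v hv]

lemma cond_nonneg (h0 : ∀ σ, 0 ≤ μ σ) (W : Finset V) (τ σ : Conf V q) : 0 ≤ condDist μ W τ σ := by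
  rw [condDist_apply]
  split
  · exact div_nonneg (h0 σ) (agree_nonneg μ h0 W τ)
  · exact le_rfl

lemma cond_ne_zero (h0 : ∀ σ, 0 ≤ μ σ) {W : Finset V} {τ σ : Conf V q} (h : condDist μ W τ σ ≠ 0) :
    (∀ v ∈ W, σ v = τ v) ∧ 0 < μ σ := by
  rw [condDist_apply] at h
  split at h
  · refine ⟨by assumption, ?_⟩
    rcases (h0 σ).lt_or_eq with h' | h'
    · exact h'
    · exact absurd (by rw [← h', zero_div]) h
  · exact absurd rfl h

lemma cond_eq_zero_of_notmem {W : Finset V} {τ σ : Conf V q} (h : σ ∉ cls W τ) :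
    condDist μ W τ σ = 0 := by
  rw [condDist_apply, if_neg (fun hc => h (mem_cls.2 hc))]

lemma sum_cond {W : Finset V} {τ : Conf V q} (hpos : 0 < agreeProb μ W τ) :
    ∑ σ : Conf V q, condDist μ W τ σ = 1 := by
  simp only [condDist_apply]
  rw [sum_ite_cls, ← Finset.sum_div, ← agree_eq, div_self hpos.ne']

lemma cond_of_agree_eq_zero {W : Finset V} {τ : Conf V q} (h : agreeProb μ W τ = 0) :
    condDist μ W τ = fun _ => 0 := by
  funext σ
  rw [condDist_apply, h]
  split <;> simp

/-- The composition/tower identity for conditional kernels. -/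
lemma cond_mul_cond (h0 : ∀ σ, 0 ≤ μ σ) {W W' : Finset V} (hsub : W ⊆ W') (τ σ : Conf V q) :
    ∑ ρ : Conf V q, condDist μ W τ ρ * condDist μ W' ρ σ = condDist μ W τ σ := by
  by_cases hσ : ∀ v ∈ W, σ v = τ v
  · have hstep : ∀ ρ : Conf V q, condDist μ W τ ρ * condDist μ W' ρ σ =
        if (∀ v ∈ W', ρ v = σ v) then
          μ ρ * (μ σ / (agreeProb μ W τ * agreeProb μ W' σ)) else 0 := by
      intro ρ
      by_cases h1 : ∀ v ∈ W', ρ v = σ v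
      · have h1' : ∀ v ∈ W', σ v = ρ v := fun v hv => (h1 v hv).symm
        have h2 : ∀ v ∈ W, ρ v = τ v := fun v hv => (h1 v (hsub hv)).trans (hσ v hv)
        rw [if_pos h1, condDist_apply, condDist_apply, if_pos h2, if_pos h1',
          agree_congr μ (W := W') h1, div_mul_div_comm, mul_div_assoc]
      · have h1' : ¬ ∀ v ∈ W', σ v = ρ v := fun h => h1 (fun v hv => (h v hv).symm)
        rw [if_neg h1, condDist_apply μ W', if_neg h1', mul_zero]
    rw [Finset.sum_congr rfl (fun ρ _ => hstep ρ), sum_ite_cls,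
      ← Finset.sum_mul, ← agree_eq]
    by_cases hA : agreeProb μ W' σ = 0
    · have hμσ : μ σ = 0 := le_antisymm (hA ▸ le_agree μ h0 W' σ) (h0 σ)
      rw [condDist_apply, if_pos hσ, hμσ, hA, mul_zero, zero_div, zero_div, mul_zero]
    · rw [condDist_apply, if_pos hσ]
      by_cases hB : agreeProb μ W τ = 0
      · simp [hB]
      · field_simp
  · rw [condDist_apply, if_neg hσ]
    apply Finset.sum_eq_zero; intro ρ _
    by_cases h1 : ∀ v ∈ W, ρ v = τ v
    · have h2 : ¬ ∀ v ∈ W', σ v = ρ v := by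
        intro h2; exact hσ (fun v hv => (h2 v (hsub hv)).trans (h1 v hv))
      rw [condDist_apply μ W', if_neg h2, mul_zero]
    · rw [condDist_apply, if_neg h1, zero_mul]

lemma cond_empty (hsum : ∑ σ : Conf V q, μ σ = 1) (τ : Conf V q) :
    condDist μ (∅ : Finset V) τ = μ := by
  funext σ
  have hcls : cls (∅ : Finset V) τ = (univ : Finset (Conf V q)) := by
    ext η; simp [mem_cls]
  have hagree : agreeProb μ (∅ : Finset V) τ = 1 := by
    rw [agree_eq, hcls, hsum]
  rw [condDist_apply, if_pos (by simp), hagree, div_one]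

lemma sum_mu_cond (h0 : ∀ σ, 0 ≤ μ σ) (hsum : ∑ σ : Conf V q, μ σ = 1)
    (W : Finset V) (σ : Conf V q) :
    ∑ ρ : Conf V q, μ ρ * condDist μ W ρ σ = μ σ := by
  have := cond_mul_cond μ h0 (Finset.empty_subset W) σ σ
  rwa [cond_empty μ hsum σ] at this

lemma kernel_sum {K : Conf V q → Conf V q → ℝ} {ν κ : Conf V q → ℝ}
    (hK : ∀ σ, ∑ ρ : Conf V q, ν ρ * K ρ σ = κ σ) (F : Conf V q → ℝ) :
    ∑ ρ : Conf V q, ν ρ * (∑ σ : Conf V q, K ρ σ * F σ) = ∑ σ : Conf V q, κ σ * F σ := by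
  calc ∑ ρ : Conf V q, ν ρ * (∑ σ : Conf V q, K ρ σ * F σ)
      = ∑ ρ : Conf V q, ∑ σ : Conf V q, ν ρ * K ρ σ * F σ := by
        simp [Finset.mul_sum, mul_assoc]
    _ = ∑ σ : Conf V q, ∑ ρ : Conf V q, ν ρ * K ρ σ * F σ := Finset.sum_comm
    _ = ∑ σ : Conf V q, κ σ * F σ := by
        refine Finset.sum_congr rfl fun σ _ => ?_
        rw [← Finset.sum_mul, hK σ]

lemma exp_tower (h0 : ∀ σ, 0 ≤ μ σ) (hsum : ∑ σ : Conf V q, μ σ = 1)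
    (W : Finset V) (F : Conf V q → ℝ) :
    ∑ ρ : Conf V q, μ ρ * (∑ σ : Conf V q, condDist μ W ρ σ * F σ)
      = ∑ σ : Conf V q, μ σ * F σ :=
  kernel_sum (fun σ => sum_mu_cond μ h0 hsum W σ) F

lemma mean_tower (h0 : ∀ σ, 0 ≤ μ σ) {W W' : Finset V} (hsub : W ⊆ W')
    (τ : Conf V q) (f : Conf V q → ℝ) :
    ∑ ρ : Conf V q, condDist μ W τ ρ * mean (condDist μ W' ρ) f
      = mean (condDist μ W τ) f :=
  kernel_sum (fun σ => cond_mul_cond μ h0 hsub τ σ) f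

lemma mean_nonneg {ν f : Conf V q → ℝ} (hν : ∀ σ, 0 ≤ ν σ) (hf : ∀ σ, 0 ≤ f σ) :
    0 ≤ mean ν f :=
  Finset.sum_nonneg fun σ _ => mul_nonneg (hν σ) (hf σ)

lemma ent_congr_supp {ν f g : Conf V q → ℝ} (h : ∀ σ, ν σ ≠ 0 → f σ = g σ) :
    ent ν f = ent ν g := by
  have e1 : ∀ u : ℝ → ℝ, (∑ x : Conf V q, ν x * u (f x)) = ∑ x : Conf V q, ν x * u (g x) := by
    intro u
    refine Finset.sum_congr rfl fun x _ => ?_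
    by_cases hx : ν x = 0
    · simp [hx]
    · rw [h x hx]
  have e2 : (∑ x : Conf V q, ν x * f x * Real.log (f x))
      = ∑ x : Conf V q, ν x * g x * Real.log (g x) := by
    have := e1 (fun y => y * Real.log y)
    simpa [mul_assoc] using this
  have e3 : mean ν f = mean ν g := by
    have := e1 id
    simpa [mean] using this
  rw [ent, ent, e2, e3]

lemma ent_zero_meas (f : Conf V q → ℝ) : ent (fun _ : Conf V q => 0) f = 0 := by
  simp [ent, mean]

lemma ent_nonneg {ν f : Conf V q → ℝ} (hν0 : ∀ σ, 0 ≤ ν σ)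
    (hν1 : ∑ σ : Conf V q, ν σ = 1) (hf : ∀ σ, 0 ≤ f σ) : 0 ≤ ent ν f := by
  have hj := Real.convexOn_mul_log.map_sum_le (t := (univ : Finset (Conf V q)))
    (w := ν) (p := f) (fun i _ => hν0 i) hν1 (fun i _ => hf i)
  simp only [smul_eq_mul] at hj
  have h1 : (∑ i : Conf V q, ν i * f i) = mean ν f := rfl
  have h2 : (∑ i : Conf V q, ν i * (f i * Real.log (f i)))
      = ∑ i : Conf V q, ν i * f i * Real.log (f i) := by
    simp [mul_assoc]
  rw [h1, h2] at hj
  rw [ent]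
  linarith

lemma ent_cond_nonneg (h0 : ∀ σ, 0 ≤ μ σ) (W : Finset V) (τ : Conf V q)
    {f : Conf V q → ℝ} (hf : ∀ σ, 0 ≤ f σ) : 0 ≤ ent (condDist μ W τ) f := by
  rcases (agree_nonneg μ h0 W τ).lt_or_eq with hpos | hzero
  · exact ent_nonneg (cond_nonneg μ h0 W τ) (sum_cond μ hpos) hf
  · rw [cond_of_agree_eq_zero μ hzero.symm, ent_zero_meas]

/-- Chain rule (exact identity). -/
lemma chain_rule (h0 : ∀ σ, 0 ≤ μ σ) {W W' : Finset V} (hsub : W ⊆ W')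
    (τ : Conf V q) (f : Conf V q → ℝ) :
    ent (condDist μ W τ) f =
      (∑ ρ : Conf V q, condDist μ W τ ρ * ent (condDist μ W' ρ) f)
        + ent (condDist μ W τ) (fun σ => mean (condDist μ W' σ) f) := by
  set ν := condDist μ W τ with hν
  set Fb : Conf V q → ℝ := fun σ => mean (condDist μ W' σ) f with hFb
  have key1 : ∑ ρ : Conf V q, ν ρ * (∑ σ : Conf V q, condDist μ W' ρ σ *
      (f σ * Real.log (f σ))) = ∑ σ : Conf V q, ν σ * (f σ * Real.log (f σ)) :=
    kernel_sum (fun σ => cond_mul_cond μ h0 hsub τ σ) _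
  have key2 : mean ν Fb = mean ν f := mean_tower μ h0 hsub τ f
  have expand : ∀ ρ : Conf V q, ent (condDist μ W' ρ) f =
      (∑ σ : Conf V q, condDist μ W' ρ σ * (f σ * Real.log (f σ)))
        - Fb ρ * Real.log (Fb ρ) := by
    intro ρ; rw [ent]; congr 1; exact Finset.sum_congr rfl fun σ _ => by ring
  have lhs1 : ent ν f = (∑ σ : Conf V q, ν σ * (f σ * Real.log (f σ)))
      - mean ν f * Real.log (mean ν f) := by
    rw [ent]; congr 1; exact Finset.sum_congr rfl fun σ _ => by ring
  have entFb : ent ν Fb = (∑ σ : Conf V q, ν σ * (Fb σ * Real.log (Fb σ)))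
      - mean ν Fb * Real.log (mean ν Fb) := by
    rw [ent]; congr 1; exact Finset.sum_congr rfl fun σ _ => by ring
  rw [lhs1, entFb, key2]
  have : ∑ ρ : Conf V q, ν ρ * ent (condDist μ W' ρ) f =
      (∑ ρ : Conf V q, ν ρ * (∑ σ : Conf V q, condDist μ W' ρ σ * (f σ * Real.log (f σ))))
        - ∑ ρ : Conf V q, ν ρ * (Fb ρ * Real.log (Fb ρ)) := by
    rw [← Finset.sum_sub_distrib]
    refine Finset.sum_congr rfl fun ρ _ => ?_
    rw [expand ρ, mul_sub]
  rw [this, key1]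
  ring

lemma chain_rule_le (h0 : ∀ σ, 0 ≤ μ σ) {W W' : Finset V} (hsub : W ⊆ W')
    (τ : Conf V q) {f : Conf V q → ℝ} (hf : ∀ σ, 0 ≤ f σ) :
    ∑ ρ : Conf V q, condDist μ W τ ρ * ent (condDist μ W' ρ) f
      ≤ ent (condDist μ W τ) f := by
  rw [chain_rule μ h0 hsub τ f]
  have : 0 ≤ ent (condDist μ W τ) (fun σ => mean (condDist μ W' σ) f) :=
    ent_cond_nonneg μ h0 W τ (fun σ => mean_nonneg (cond_nonneg μ h0 W' σ) hf)
  linarith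

lemma sum_ent_mono (h0 : ∀ σ, 0 ≤ μ σ) (hsum : ∑ σ : Conf V q, μ σ = 1)
    {W W' : Finset V} (hsub : W ⊆ W') {f : Conf V q → ℝ} (hf : ∀ σ, 0 ≤ f σ) :
    ∑ ρ : Conf V q, μ ρ * ent (condDist μ W' ρ) f
      ≤ ∑ ρ : Conf V q, μ ρ * ent (condDist μ W ρ) f := by
  rw [← exp_tower μ h0 hsum W (fun ρ => ent (condDist μ W' ρ) f)]
  refine Finset.sum_le_sum fun τ _ => ?_
  exact mul_le_mul_of_nonneg_left (chain_rule_le μ h0 hsub τ hf) (h0 τ)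

lemma ent_cond_univ (h0 : ∀ σ, 0 ≤ μ σ) {τ : Conf V q} (hτ : 0 < μ τ)
    (g : Conf V q → ℝ) : ent (condDist μ (univ : Finset V) τ) g = 0 := by
  have hagree : agreeProb μ (univ : Finset V) τ = μ τ := by
    rw [agree_eq]
    have : cls (univ : Finset V) τ = {τ} := by
      ext η
      simp only [mem_cls, Finset.mem_singleton, Finset.mem_univ, forall_true_left]
      exact ⟨fun h => funext h, fun h v => by rw [h]⟩
    rw [this, Finset.sum_singleton]
  have hcd : condDist μ (univ : Finset V) τ = fun σ => if σ = τ then 1 else 0 := by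
    funext σ
    rw [condDist_apply, hagree]
    by_cases h : σ = τ
    · rw [if_pos (fun v _ => by rw [h]), if_pos h, h, div_self hτ.ne']
    · rw [if_neg (fun hc => h (funext (fun v => hc v (Finset.mem_univ v)))), if_neg h]
  rw [hcd, ent, mean]
  have h1 : ∀ u : Conf V q → ℝ, (∑ x : Conf V q, (if x = τ then (1:ℝ) else 0) * u x) = u τ := by
    intro u
    rw [Finset.sum_eq_single τ]
    · simp
    · intro b _ hb; rw [if_neg hb, zero_mul]
    · intro h; exact absurd (Finset.mem_univ τ) h
  have h2 : (∑ x : Conf V q, (if x = τ then (1:ℝ) else 0) * g x * Real.log (g x)) 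
      = g τ * Real.log (g τ) := by
    have := h1 (fun y => g y * Real.log (g y))
    simpa [mul_assoc] using this
  rw [h2, h1 g]
  ring

lemma div_mul_div_cancel3 (a b c : ℝ) (hb : b ≠ 0) : b / c * (a / b) = a / c := by
  rw [div_mul_div_comm, mul_comm c b]
  exact mul_div_mul_left a c hb

lemma log_sum_aux {ι : Type*} (s : Finset ι) (hs : s.Nonempty) (a b : ι → ℝ)
    (ha : ∀ i ∈ s, 0 ≤ a i) (hb : ∀ i ∈ s, 0 < b i) :
    (∑ i ∈ s, a i) * (Real.log (∑ i ∈ s, a i) - Real.log (∑ i ∈ s, b i))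
      ≤ ∑ i ∈ s, a i * (Real.log (a i) - Real.log (b i)) := by
  set X := ∑ i ∈ s, a i with hX
  set Y := ∑ i ∈ s, b i with hY
  have hYpos : 0 < Y := Finset.sum_pos hb hs
  have hXnn : 0 ≤ X := Finset.sum_nonneg ha
  have hw1 : ∑ i ∈ s, b i / Y = 1 := by rw [← Finset.sum_div, div_self hYpos.ne']
  have hj := Real.convexOn_mul_log.map_sum_le (t := s) (w := fun i => b i / Y)
    (p := fun i => a i / b i) (fun i hi => div_nonneg (hb i hi).le hYpos.le) hw1
    (fun i hi => div_nonneg (ha i hi) (hb i hi).le)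
  simp only [smul_eq_mul] at hj
  have hpt : ∀ i ∈ s, b i / Y * (a i / b i) = a i / Y := fun i hi =>
    div_mul_div_cancel3 (a i) (b i) Y (hb i hi).ne'
  rw [Finset.sum_congr rfl hpt, ← Finset.sum_div] at hj
  have hpt2 : ∀ i ∈ s, b i / Y * (a i / b i * Real.log (a i / b i))
      = (a i * (Real.log (a i) - Real.log (b i))) / Y := by
    intro i hi
    rw [← mul_assoc, div_mul_div_cancel3 (a i) (b i) Y (hb i hi).ne']
    rcases (ha i hi).lt_or_eq with hai | hai
    · rw [Real.log_div hai.ne' (hb i hi).ne', div_mul_eq_mul_div]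
    · rw [← hai]; simp
  rw [Finset.sum_congr rfl hpt2, ← Finset.sum_div] at hj
  rcases hXnn.lt_or_eq with hXpos | hX0
  · rw [Real.log_div hXpos.ne' hYpos.ne'] at hj
    have h2 := mul_le_mul_of_nonneg_right hj hYpos.le
    rw [div_mul_cancel₀ _ hYpos.ne'] at h2
    calc X * (Real.log X - Real.log Y)
        = X / Y * (Real.log X - Real.log Y) * Y := by
          field_simp
      _ ≤ ∑ i ∈ s, a i * (Real.log (a i) - Real.log (b i)) := h2
  · have hz : ∀ i ∈ s, a i = 0 := by
      intro i hi
      have := (Finset.sum_eq_zero_iff_of_nonneg ha).mp hX0.symm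
      exact this i hi
    rw [← hX0, Finset.sum_congr rfl (fun i hi => by rw [hz i hi, zero_mul] :
      ∀ i ∈ s, a i * (Real.log (a i) - Real.log (b i)) = 0)]
    simp

lemma ent_jensen {ι : Type*} (ν : Conf V q → ℝ) (hν0 : ∀ σ, 0 ≤ ν σ)
    (t : Finset ι) (p : ι → ℝ) (u : ι → Conf V q → ℝ)
    (hp0 : ∀ i ∈ t, 0 ≤ p i) (hu : ∀ i ∈ t, ∀ σ, 0 ≤ u i σ) :
    ent ν (fun σ => ∑ i ∈ t, p i * u i σ) ≤ ∑ i ∈ t, p i * ent ν (u i) := by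
  classical
  set m : ι → ℝ := fun i => mean ν (u i) with hm
  set t' := t.filter (fun i => 0 < p i ∧ 0 < m i) with ht'
  have ht'sub : t' ⊆ t := Finset.filter_subset _ _
  have hmem : ∀ i ∈ t', 0 < p i ∧ 0 < m i := fun i hi => (Finset.mem_filter.mp hi).2
  have hzero_u : ∀ i ∈ t, m i = 0 → ∀ σ, ν σ * u i σ = 0 := by
    intro i hi hmi σ
    have hsum0 : ∑ σ' : Conf V q, ν σ' * u i σ' = 0 := hmi
    exact (Finset.sum_eq_zero_iff_of_nonneg
      (fun σ' _ => mul_nonneg (hν0 σ') (hu i hi σ'))).mp hsum0 σ (Finset.mem_univ σ)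
  have hdeg : ∀ i ∈ t, i ∉ t' → p i = 0 ∨ m i = 0 := by
    intro i hi hni
    rw [ht', Finset.mem_filter] at hni
    push_neg at hni
    by_cases hpi : 0 < p i
    · right
      exact le_antisymm (hni hi hpi) (mean_nonneg hν0 (hu i hi))
    · left; exact le_antisymm (not_lt.mp hpi) (hp0 i hi)
  have hleft : ent ν (fun σ => ∑ i ∈ t, p i * u i σ)
      = ent ν (fun σ => ∑ i ∈ t', p i * u i σ) := by
    apply ent_congr_supp
    intro σ hσ
    refine (Finset.sum_subset ht'sub ?_).symm
    intro i hi hni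
    rcases hdeg i hi hni with h | h
    · rw [h, zero_mul]
    · rcases mul_eq_zero.mp (hzero_u i hi h σ) with h' | h'
      · exact absurd h' hσ
      · rw [h', mul_zero]
  have hright : ∑ i ∈ t, p i * ent ν (u i) = ∑ i ∈ t', p i * ent ν (u i) := by
    refine (Finset.sum_subset ht'sub ?_).symm
    intro i hi hni
    rcases hdeg i hi hni with h | h
    · rw [h, zero_mul]
    · have hent0 : ent ν (u i) = 0 := by
        rw [ent]
        have e1 : ∀ σ : Conf V q, ν σ * u i σ * Real.log (u i σ) = 0 := fun σ => by
          rw [hzero_u i hi h σ, zero_mul]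
        rw [Finset.sum_eq_zero (fun σ _ => e1 σ)]
        rw [show mean ν (u i) = m i from rfl, h]
        simp
      rw [hent0, mul_zero]
  rw [hleft, hright]
  rcases Finset.eq_empty_or_nonempty t' with he | hne
  · rw [he]; simp [ent, mean]
  · set F : Conf V q → ℝ := fun σ => ∑ i ∈ t', p i * u i σ with hF
    have hmean : mean ν F = ∑ i ∈ t', p i * m i := by
      calc mean ν F = ∑ σ : Conf V q, ∑ i ∈ t', ν σ * (p i * u i σ) := by
            rw [mean]; exact Finset.sum_congr rfl fun σ _ => by rw [Finset.mul_sum]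
        _ = ∑ i ∈ t', ∑ σ : Conf V q, ν σ * (p i * u i σ) := Finset.sum_comm
        _ = ∑ i ∈ t', p i * m i := by
            refine Finset.sum_congr rfl fun i _ => ?_
            rw [show m i = mean ν (u i) from rfl, mean, Finset.mul_sum]
            exact Finset.sum_congr rfl fun σ _ => by ring
    set M := ∑ i ∈ t', p i * m i with hM
    have hMpos : 0 < M :=
      Finset.sum_pos (fun i hi => mul_pos (hmem i hi).1 (hmem i hi).2) hne
    have hpoint : ∀ σ, F σ * (Real.log (F σ) - Real.log M)
        ≤ ∑ i ∈ t', p i * (u i σ * (Real.log (u i σ) - Real.log (m i))) := by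
      intro σ
      have hls := log_sum_aux t' hne (fun i => p i * u i σ) (fun i => p i * m i)
        (fun i hi => mul_nonneg (hmem i hi).1.le (hu i (ht'sub hi) σ))
        (fun i hi => mul_pos (hmem i hi).1 (hmem i hi).2)
      have hterm : ∀ i ∈ t',
          p i * u i σ * (Real.log (p i * u i σ) - Real.log (p i * m i))
            = p i * (u i σ * (Real.log (u i σ) - Real.log (m i))) := by
        intro i hi
        rcases (hu i (ht'sub hi) σ).lt_or_eq with hui | hui
        · rw [Real.log_mul (hmem i hi).1.ne' hui.ne',
            Real.log_mul (hmem i hi).1.ne' (hmem i hi).2.ne']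
          ring
        · rw [← hui]; simp
      rw [Finset.sum_congr rfl hterm] at hls
      exact hls
    have key : ∑ σ : Conf V q, ν σ * (F σ * (Real.log (F σ) - Real.log M))
        ≤ ∑ σ : Conf V q, ν σ *
            (∑ i ∈ t', p i * (u i σ * (Real.log (u i σ) - Real.log (m i)))) :=
      Finset.sum_le_sum fun σ _ => mul_le_mul_of_nonneg_left (hpoint σ) (hν0 σ)
    have lhs_eq : ∑ σ : Conf V q, ν σ * (F σ * (Real.log (F σ) - Real.log M))
        = ent ν F := by
      have e : ∀ σ : Conf V q, ν σ * (F σ * (Real.log (F σ) - Real.log M))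
          = ν σ * F σ * Real.log (F σ) - ν σ * F σ * Real.log M := fun σ => by ring
      rw [Finset.sum_congr rfl (fun σ _ => e σ), Finset.sum_sub_distrib,
        ← Finset.sum_mul, show (∑ σ : Conf V q, ν σ * F σ) = mean ν F from rfl,
        ent, hmean]
    have rhs_eq : ∑ σ : Conf V q, ν σ *
          (∑ i ∈ t', p i * (u i σ * (Real.log (u i σ) - Real.log (m i))))
        = ∑ i ∈ t', p i * ent ν (u i) := by
      calc ∑ σ : Conf V q, ν σ *
            (∑ i ∈ t', p i * (u i σ * (Real.log (u i σ) - Real.log (m i))))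
          = ∑ σ : Conf V q, ∑ i ∈ t',
              (ν σ * u i σ * Real.log (u i σ) - ν σ * u i σ * Real.log (m i)) * p i := by
            refine Finset.sum_congr rfl fun σ _ => ?_
            rw [Finset.mul_sum]
            exact Finset.sum_congr rfl fun i _ => by ring
        _ = ∑ i ∈ t', ∑ σ : Conf V q,
              (ν σ * u i σ * Real.log (u i σ) - ν σ * u i σ * Real.log (m i)) * p i :=
            Finset.sum_comm
        _ = ∑ i ∈ t', p i * ent ν (u i) := by
            refine Finset.sum_congr rfl fun i _ => ?_
            rw [← Finset.sum_mul, Finset.sum_sub_distrib, ← Finset.sum_mul]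
            rw [show (∑ σ : Conf V q, ν σ * u i σ) = m i from rfl]
            rw [ent, show mean ν (u i) = m i from rfl]
            ring
    rw [lhs_eq, rhs_eq] at key
    exact key

/-- Override the values of `σ` on `T` by those of `ζ`. -/
def ov (T : Finset V) (ζ σ : Conf V q) : Conf V q := fun v => if v ∈ T then ζ v else σ v

lemma ov_mem {T : Finset V} {ζ σ : Conf V q} {v : V} (h : v ∈ T) : ov T ζ σ v = ζ v :=
  if_pos h

lemma ov_notmem {T : Finset V} {ζ σ : Conf V q} {v : V} (h : v ∉ T) : ov T ζ σ v = σ v :=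
  if_neg h

lemma ov_eq_self {T : Finset V} {η σ : Conf V q} (h : ∀ v, v ∉ T → η v = σ v) :
    ov T η σ = η := by
  funext v
  by_cases hv : v ∈ T
  · rw [ov_mem hv]
  · rw [ov_notmem hv, h v hv]

lemma mem_cls_compl {W : Finset V} {τ σ : Conf V q} :
    σ ∈ cls Wᶜ τ ↔ ∀ v, v ∉ W → σ v = τ v := by
  simp [mem_cls]

lemma sum_cond_mul (W : Finset V) (τ : Conf V q) (F : Conf V q → ℝ) :
    ∑ σ : Conf V q, condDist μ W τ σ * F σ = ∑ σ ∈ cls W τ, condDist μ W τ σ * F σ :=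
  (Finset.sum_subset (Finset.subset_univ _) fun σ _ hσ => by
    rw [cond_eq_zero_of_notmem μ hσ, zero_mul]).symm

lemma mean_cond_eq (W : Finset V) (τ : Conf V q) (h : Conf V q → ℝ) :
    mean (condDist μ W τ) h = (∑ σ ∈ cls W τ, μ σ * h σ) / agreeProb μ W τ := by
  rw [mean, sum_cond_mul, Finset.sum_div]
  refine Finset.sum_congr rfl fun σ hσ => ?_
  rw [condDist_apply, if_pos (mem_cls.mp hσ), div_mul_eq_mul_div]

section Factor

variable (T P : Finset V) (A B : Conf V q → ℝ)
variable (hA0 : ∀ σ, 0 ≤ A σ) (hB0 : ∀ σ, 0 ≤ B σ)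
variable (hAloc : ∀ σ σ', (∀ v ∈ T, σ v = σ' v) → (∀ v ∈ P, σ v = σ' v) → A σ = A σ')
variable (hBloc : ∀ σ σ', (∀ v, v ∉ T → σ v = σ' v) → B σ = B σ')
variable (hABμ : ∀ σ, μ σ = A σ * B σ)

lemma fact_pos (hA0' : ∀ σ, 0 ≤ A σ) (hB0' : ∀ σ, 0 ≤ B σ)
    (hABμ' : ∀ σ, μ σ = A σ * B σ) {σ : Conf V q} (h : 0 < μ σ) :
    0 < A σ ∧ 0 < B σ := by
  constructor
  · rcases (hA0' σ).lt_or_eq with h' | h'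
    · exact h'
    · exact absurd (by rw [hABμ' σ, ← h', zero_mul]) h.ne'
  · rcases (hB0' σ).lt_or_eq with h' | h'
    · exact h'
    · exact absurd (by rw [hABμ' σ, ← h', mul_zero]) h.ne'

include hAloc in
lemma sum_A_cls {σ σ' : Conf V q} (hP : ∀ v ∈ P, σ v = σ' v) :
    ∑ η ∈ cls Tᶜ σ, A η = ∑ η ∈ cls Tᶜ σ', A η := by
  refine Finset.sum_nbij' (fun η => ov T η σ') (fun η => ov T η σ) ?_ ?_ ?_ ?_ ?_
  · intro η hη
    rw [mem_cls_compl]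
    intro v hv
    exact ov_notmem hv
  · intro η hη
    rw [mem_cls_compl]
    intro v hv
    exact ov_notmem hv
  · intro η hη
    rw [mem_cls_compl] at hη
    funext v
    by_cases hv : v ∈ T
    · simp [ov, hv]
    · simp only [ov, if_neg hv]
      exact (hη v hv).symm
  · intro η hη
    rw [mem_cls_compl] at hη
    funext v
    by_cases hv : v ∈ T
    · simp [ov, hv]
    · simp only [ov, if_neg hv]
      exact (hη v hv).symm
  · intro η hη
    rw [mem_cls_compl] at hη
    refine hAloc η (ov T η σ') (fun v hv => (ov_mem hv).symm) (fun v hv => ?_)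
    by_cases hvT : v ∈ T
    · rw [ov_mem hvT]
    · rw [ov_notmem hvT, hη v hvT, hP v hv]

include hAloc hBloc hABμ in
lemma agree_Tc_eq (σ : Conf V q) :
    agreeProb μ Tᶜ σ = B σ * ∑ η ∈ cls Tᶜ σ, A η := by
  rw [agree_eq, Finset.mul_sum]
  refine Finset.sum_congr rfl fun η hη => ?_
  rw [mem_cls_compl] at hη
  rw [hABμ η, hBloc η σ hη, mul_comm]

include hAloc hBloc hABμ in
lemma agree_Bc_eq (B' : Finset V) (hB'T : Disjoint B' T) (hB'P : Disjoint B' P)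
    (ρ : Conf V q) :
    agreeProb μ B'ᶜ ρ = A ρ * ∑ η ∈ cls B'ᶜ ρ, B η := by
  rw [agree_eq, Finset.mul_sum]
  refine Finset.sum_congr rfl fun η hη => ?_
  rw [mem_cls_compl] at hη
  rw [hABμ η]
  rw [hAloc η ρ (fun v hv => hη v (Finset.disjoint_right.mp hB'T hv))
    (fun v hv => hη v (Finset.disjoint_right.mp hB'P hv))]

include hBloc in
lemma sum_B_cls (B' : Finset V) (hB'T : Disjoint B' T) {ζ ρ : Conf V q}
    (hζρ : ∀ v, v ∉ T → ζ v = ρ v) :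
    ∑ η ∈ cls B'ᶜ ζ, B η = ∑ η ∈ cls B'ᶜ ρ, B η := by
  refine Finset.sum_nbij' (fun η => ov T ρ η) (fun η => ov T ζ η) ?_ ?_ ?_ ?_ ?_
  · intro η hη
    rw [mem_cls_compl] at hη ⊢
    intro v hv
    by_cases hvT : v ∈ T
    · simp [ov, hvT]
    · simp only [ov, if_neg hvT]
      rw [hη v hv]
      exact hζρ v hvT
  · intro η hη
    rw [mem_cls_compl] at hη ⊢
    intro v hv
    by_cases hvT : v ∈ T
    · simp [ov, hvT]
    · simp only [ov, if_neg hvT]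
      rw [hη v hv]
      exact (hζρ v hvT).symm
  · intro η hη
    rw [mem_cls_compl] at hη
    funext v
    by_cases hvT : v ∈ T
    · simp only [ov, if_pos hvT]
      exact (hη v (Finset.disjoint_right.mp hB'T hvT)).symm
    · simp [ov, hvT]
  · intro η hη
    rw [mem_cls_compl] at hη
    funext v
    by_cases hvT : v ∈ T
    · simp only [ov, if_pos hvT]
      exact (hη v (Finset.disjoint_right.mp hB'T hvT)).symm
    · simp [ov, hvT]
  · intro η hη
    exact hBloc η (ov T ρ η) (fun v hv => (ov_notmem hv).symm)

include hA0 hB0 hAloc hBloc hABμ in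
lemma cond_push (h0 : ∀ σ, 0 ≤ μ σ) (B' : Finset V) (hB'T : Disjoint B' T)
    (hB'P : Disjoint B' P) {ρ ζ : Conf V q} (hρ : 0 < μ ρ) (hζ : 0 < μ ζ)
    (hζρ : ∀ v, v ∉ T → ζ v = ρ v) {σ : Conf V q} (hσ : ∀ v, v ∉ B' → σ v = ρ v) :
    condDist μ B'ᶜ ρ σ = condDist μ B'ᶜ ζ (ov T ζ σ) := by
  have hAρ := (fact_pos μ A B hA0 hB0 hABμ hρ).1
  have hAζ := (fact_pos μ A B hA0 hB0 hABμ hζ).1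
  set SB := ∑ η ∈ cls B'ᶜ ρ, B η with hSB
  have hL : condDist μ B'ᶜ ρ σ = B σ / SB := by
    rw [condDist_apply, if_pos (fun v hv => hσ v (Finset.mem_compl.mp hv)),
      agree_Bc_eq μ T P A B hAloc hBloc hABμ B' hB'T hB'P ρ, hABμ σ,
      hAloc σ ρ (fun v hv => hσ v (Finset.disjoint_right.mp hB'T hv))
        (fun v hv => hσ v (Finset.disjoint_right.mp hB'P hv)), ← hSB]
    exact mul_div_mul_left _ _ hAρ.ne'
  have hmemζ : ∀ v ∈ B'ᶜ, ov T ζ σ v = ζ v := by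
    intro v hv
    rw [Finset.mem_compl] at hv
    by_cases hvT : v ∈ T
    · rw [ov_mem hvT]
    · rw [ov_notmem hvT, hσ v hv, ← hζρ v hvT]
  have hR : condDist μ B'ᶜ ζ (ov T ζ σ) = B σ / SB := by
    rw [condDist_apply, if_pos hmemζ,
      agree_Bc_eq μ T P A B hAloc hBloc hABμ B' hB'T hB'P ζ, hABμ (ov T ζ σ)]
    have hA' : A (ov T ζ σ) = A ζ := by
      refine hAloc _ _ (fun v hv => ov_mem hv) (fun v hv => ?_)
      by_cases hvT : v ∈ T
      · rw [ov_mem hvT]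
      · rw [ov_notmem hvT, hσ v (Finset.disjoint_right.mp hB'P hv), ← hζρ v hvT]
    have hB' : B (ov T ζ σ) = B σ := hBloc _ _ (fun v hv => ov_notmem hv)
    have hSB' : (∑ η ∈ cls B'ᶜ ζ, B η) = SB :=
      sum_B_cls T B hBloc B' hB'T hζρ
    rw [hA', hB', hSB']
    exact mul_div_mul_left _ _ hAζ.ne'
  rw [hL, hR]

include hA0 hB0 hAloc hBloc hABμ in
lemma cond_transport (h0 : ∀ σ, 0 ≤ μ σ) (B' : Finset V) (hB'T : Disjoint B' T)
    (hB'P : Disjoint B' P) {ρ ζ : Conf V q} (hρ : 0 < μ ρ) (hζ : 0 < μ ζ)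
    (hζρ : ∀ v, v ∉ T → ζ v = ρ v) (G : Conf V q → ℝ) :
    ∑ σ : Conf V q, condDist μ B'ᶜ ρ σ * G (ov T ζ σ)
      = ∑ σ : Conf V q, condDist μ B'ᶜ ζ σ * G σ := by
  have hres : (∑ σ : Conf V q, condDist μ B'ᶜ ρ σ * G (ov T ζ σ))
      = ∑ σ ∈ cls B'ᶜ ρ, condDist μ B'ᶜ ρ σ * G (ov T ζ σ) :=
    (Finset.sum_subset (Finset.subset_univ _) fun σ _ hσ => by
      rw [cond_eq_zero_of_notmem μ hσ, zero_mul]).symm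
  rw [hres, sum_cond_mul μ B'ᶜ ζ G]
  refine Finset.sum_nbij' (fun σ => ov T ζ σ) (fun σ => ov T ρ σ) ?_ ?_ ?_ ?_ ?_
  · intro σ hσ
    rw [mem_cls_compl] at hσ ⊢
    intro v hv
    by_cases hvT : v ∈ T
    · simp [ov, hvT]
    · simp only [ov, if_neg hvT]
      rw [hσ v hv]
      exact (hζρ v hvT).symm
  · intro σ hσ
    rw [mem_cls_compl] at hσ ⊢
    intro v hv
    by_cases hvT : v ∈ T
    · simp [ov, hvT]
    · simp only [ov, if_neg hvT]
      rw [hσ v hv]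
      exact hζρ v hvT
  · intro σ hσ
    rw [mem_cls_compl] at hσ
    funext v
    by_cases hvT : v ∈ T
    · simp only [ov, if_pos hvT]
      exact (hσ v (Finset.disjoint_right.mp hB'T hvT)).symm
    · simp [ov, hvT]
  · intro σ hσ
    rw [mem_cls_compl] at hσ
    funext v
    by_cases hvT : v ∈ T
    · simp only [ov, if_pos hvT]
      exact (hσ v (Finset.disjoint_right.mp hB'T hvT)).symm
    · simp [ov, hvT]
  · intro σ hσ
    rw [mem_cls_compl] at hσ
    have hkey : condDist μ B'ᶜ ρ σ * G (ov T ζ σ)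
        = condDist μ B'ᶜ ζ (ov T ζ σ) * G (ov T ζ σ) := by
      rw [cond_push μ T P A B hA0 hB0 hAloc hBloc hABμ h0 B' hB'T hB'P hρ hζ hζρ hσ]
    simpa using hkey

include hA0 hB0 hAloc hBloc hABμ in
lemma weight_const (h0 : ∀ σ, 0 ≤ μ σ) (B' : Finset V) (hB'T : Disjoint B' T)
    (hB'P : Disjoint B' P) {ρ σ : Conf V q} (hρ : 0 < μ ρ) (hσpos : 0 < μ σ)
    (hσ : ∀ v, v ∉ B' → σ v = ρ v) (ζ : Conf V q) :
    condDist μ Tᶜ σ (ov T ζ σ) = condDist μ Tᶜ ρ (ov T ζ ρ) := by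
  have hBσ := (fact_pos μ A B hA0 hB0 hABμ hσpos).2
  have hBρ := (fact_pos μ A B hA0 hB0 hABμ hρ).2
  set SA := ∑ η ∈ cls Tᶜ ρ, A η with hSA
  have hP : ∀ v ∈ P, σ v = ρ v := fun v hv => hσ v (Finset.disjoint_right.mp hB'P hv)
  have hAov : A (ov T ζ σ) = A (ov T ζ ρ) := by
    refine hAloc _ _ (fun v hv => by rw [ov_mem hv, ov_mem hv]) (fun v hv => ?_)
    by_cases hvT : v ∈ T
    · rw [ov_mem hvT, ov_mem hvT]
    · rw [ov_notmem hvT, ov_notmem hvT]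
      exact hP v hv
  have hσside : condDist μ Tᶜ σ (ov T ζ σ) = A (ov T ζ ρ) / SA := by
    rw [condDist_apply, if_pos (fun v hv => ov_notmem (Finset.mem_compl.mp hv)),
      agree_Tc_eq μ T P A B hAloc hBloc hABμ σ,
      sum_A_cls T P A hAloc hP, hABμ (ov T ζ σ), hAov,
      hBloc (ov T ζ σ) σ (fun v hv => ov_notmem hv), mul_comm (A (ov T ζ ρ)) (B σ), ← hSA]
    exact mul_div_mul_left _ _ hBσ.ne'
  have hρside : condDist μ Tᶜ ρ (ov T ζ ρ) = A (ov T ζ ρ) / SA := by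
    rw [condDist_apply, if_pos (fun v hv => ov_notmem (Finset.mem_compl.mp hv)),
      agree_Tc_eq μ T P A B hAloc hBloc hABμ ρ, hABμ (ov T ζ ρ),
      hBloc (ov T ζ ρ) ρ (fun v hv => ov_notmem hv), mul_comm (A (ov T ζ ρ)) (B ρ), ← hSA]
    exact mul_div_mul_left _ _ hBρ.ne'
  rw [hσside, hρside]

include hA0 hB0 hAloc hBloc hABμ in
lemma cond_union_mean (h0 : ∀ σ, 0 ≤ μ σ) (hTP : Disjoint T P) {ρ : Conf V q}
    (hρ : 0 < μ ρ) (h : Conf V q → ℝ)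
    (hloc : ∀ σ σ', (∀ v, v ∉ T → σ v = σ' v) → h σ = h σ') :
    mean (condDist μ (P ∪ T) ρ) h = mean (condDist μ P ρ) h := by
  rw [mean_cond_eq, mean_cond_eq]
  have hDW : 0 < agreeProb μ (P ∪ T) ρ := agree_pos μ h0 _ hρ
  have hDP : 0 < agreeProb μ P ρ := agree_pos μ h0 _ hρ
  rw [div_eq_div_iff hDW.ne' hDP.ne', agree_eq, agree_eq]
  have key : ∑ x ∈ (cls (P ∪ T) ρ) ×ˢ (cls P ρ), (μ x.1 * h x.1) * μ x.2
      = ∑ x ∈ (cls P ρ) ×ˢ (cls (P ∪ T) ρ), (μ x.1 * h x.1) * μ x.2 := by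
    refine Finset.sum_nbij' (fun x => (ov T x.2 x.1, ov T x.1 x.2))
      (fun x => (ov T x.2 x.1, ov T x.1 x.2)) ?_ ?_ ?_ ?_ ?_
    · rintro ⟨η, ζ⟩ hx
      simp only [Finset.mem_product, mem_cls] at hx
      obtain ⟨hη, hζ⟩ := hx
      simp only [Finset.mem_product, mem_cls]
      constructor
      · intro v hv
        show ov T ζ η v = ρ v
        have hvT : v ∉ T := Finset.disjoint_left.mp hTP.symm hv
        rw [ov_notmem hvT]
        exact hη v (Finset.mem_union_left T hv)
      · intro v hv
        show ov T η ζ v = ρ v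
        by_cases hvT : v ∈ T
        · rw [ov_mem hvT]
          exact hη v (Finset.mem_union_right P hvT)
        · rw [ov_notmem hvT]
          rcases Finset.mem_union.mp hv with hvP | hvT'
          · exact hζ v hvP
          · exact absurd hvT' hvT
    · rintro ⟨ζ, η⟩ hx
      simp only [Finset.mem_product, mem_cls] at hx
      obtain ⟨hζ, hη⟩ := hx
      simp only [Finset.mem_product, mem_cls]
      constructor
      · intro v hv
        show ov T η ζ v = ρ v
        by_cases hvT : v ∈ T
        · rw [ov_mem hvT]
          exact hη v (Finset.mem_union_right P hvT)
        · rw [ov_notmem hvT]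
          rcases Finset.mem_union.mp hv with hvP | hvT'
          · exact hζ v hvP
          · exact absurd hvT' hvT
      · intro v hv
        show ov T ζ η v = ρ v
        have hvT : v ∉ T := Finset.disjoint_left.mp hTP.symm hv
        rw [ov_notmem hvT]
        exact hη v (Finset.mem_union_left T hv)
    · rintro ⟨η, ζ⟩ hx
      have h1 : ov T (ov T η ζ) (ov T ζ η) = η := by
        funext v; by_cases hvT : v ∈ T <;> simp [ov, hvT]
      have h2 : ov T (ov T ζ η) (ov T η ζ) = ζ := by
        funext v; by_cases hvT : v ∈ T <;> simp [ov, hvT]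
      show (ov T (ov T η ζ) (ov T ζ η), ov T (ov T ζ η) (ov T η ζ)) = (η, ζ)
      rw [h1, h2]
    · rintro ⟨ζ, η⟩ hx
      have h1 : ov T (ov T ζ η) (ov T η ζ) = ζ := by
        funext v; by_cases hvT : v ∈ T <;> simp [ov, hvT]
      have h2 : ov T (ov T η ζ) (ov T ζ η) = η := by
        funext v; by_cases hvT : v ∈ T <;> simp [ov, hvT]
      show (ov T (ov T ζ η) (ov T η ζ), ov T (ov T η ζ) (ov T ζ η)) = (ζ, η)
      rw [h1, h2]
    · rintro ⟨η, ζ⟩ hx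
      simp only [Finset.mem_product, mem_cls] at hx
      obtain ⟨hη, hζ⟩ := hx
      show μ η * h η * μ ζ = μ (ov T ζ η) * h (ov T ζ η) * μ (ov T η ζ)
      have hh : h (ov T ζ η) = h η :=
        (hloc η (ov T ζ η) (fun v hv => (ov_notmem hv).symm)).symm
      have hA1 : A (ov T ζ η) = A ζ := by
        refine hAloc _ _ (fun v hv => ov_mem hv) (fun v hv => ?_)
        have hvT : v ∉ T := Finset.disjoint_left.mp hTP.symm hv
        rw [ov_notmem hvT, hη v (Finset.mem_union_left T hv), ← hζ v hv]
      have hB1 : B (ov T ζ η) = B η := hBloc _ _ (fun v hv => ov_notmem hv)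
      have hA2 : A (ov T η ζ) = A η := by
        refine hAloc _ _ (fun v hv => ov_mem hv) (fun v hv => ?_)
        have hvT : v ∉ T := Finset.disjoint_left.mp hTP.symm hv
        rw [ov_notmem hvT, hζ v hv, ← hη v (Finset.mem_union_left T hv)]
      have hB2 : B (ov T η ζ) = B ζ := hBloc _ _ (fun v hv => ov_notmem hv)
      rw [hABμ η, hABμ ζ, hABμ (ov T ζ η), hABμ (ov T η ζ), hh, hA1, hB1, hA2, hB2]
      ring
  calc (∑ η ∈ cls (P ∪ T) ρ, μ η * h η) * ∑ ζ ∈ cls P ρ, μ ζ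
      = ∑ x ∈ (cls (P ∪ T) ρ) ×ˢ (cls P ρ), (μ x.1 * h x.1) * μ x.2 := by
        rw [Finset.sum_mul_sum, ← Finset.sum_product']
    _ = ∑ x ∈ (cls P ρ) ×ˢ (cls (P ∪ T) ρ), (μ x.1 * h x.1) * μ x.2 := key
    _ = (∑ ζ ∈ cls P ρ, μ ζ * h ζ) * ∑ η ∈ cls (P ∪ T) ρ, μ η := by
        rw [Finset.sum_mul_sum, ← Finset.sum_product']

include hA0 hB0 hAloc hBloc hABμ in
lemma cond_union_ent (h0 : ∀ σ, 0 ≤ μ σ) (hTP : Disjoint T P) {ρ : Conf V q}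
    (hρ : 0 < μ ρ) (h : Conf V q → ℝ)
    (hloc : ∀ σ σ', (∀ v, v ∉ T → σ v = σ' v) → h σ = h σ') :
    ent (condDist μ (P ∪ T) ρ) h = ent (condDist μ P ρ) h := by
  have h1 := cond_union_mean μ T P A B hA0 hB0 hAloc hBloc hABμ h0 hTP hρ h hloc
  have h2 := cond_union_mean μ T P A B hA0 hB0 hAloc hBloc hABμ h0 hTP hρ
    (fun σ => h σ * Real.log (h σ)) (fun σ σ' hss => by
      show h σ * Real.log (h σ) = h σ' * Real.log (h σ')
      rw [hloc σ σ' hss])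
  have e : ∀ ν' : Conf V q → ℝ, (∑ σ : Conf V q, ν' σ * h σ * Real.log (h σ))
      = mean ν' (fun σ => h σ * Real.log (h σ)) := fun ν' => by
    rw [mean]; exact Finset.sum_congr rfl fun σ _ => by ring
  rw [ent, ent, h1, e, e, h2]

lemma ent_transport {ν₁ ν₂ : Conf V q → ℝ} (e : Conf V q → Conf V q) (u : Conf V q → ℝ)
    (h : ∀ G : Conf V q → ℝ, (∑ σ : Conf V q, ν₁ σ * G (e σ)) = ∑ σ : Conf V q, ν₂ σ * G σ) :
    ent ν₁ (fun σ => u (e σ)) = ent ν₂ u := by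
  have e1 : (∑ σ : Conf V q, ν₁ σ * u (e σ) * Real.log (u (e σ)))
      = ∑ σ : Conf V q, ν₂ σ * u σ * Real.log (u σ) := by
    calc (∑ σ : Conf V q, ν₁ σ * u (e σ) * Real.log (u (e σ)))
        = ∑ σ : Conf V q, ν₁ σ * (u (e σ) * Real.log (u (e σ))) :=
          Finset.sum_congr rfl fun σ _ => by ring
      _ = ∑ σ : Conf V q, ν₂ σ * (u σ * Real.log (u σ)) := h (fun x => u x * Real.log (u x))
      _ = _ := Finset.sum_congr rfl fun σ _ => by ring
  have e2 : mean ν₁ (fun σ => u (e σ)) = mean ν₂ u := h u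
  simp only [ent]
  rw [e1, e2]

include hA0 hB0 hAloc hBloc hABμ in
lemma proj_le (h0 : ∀ σ, 0 ≤ μ σ) (hsum : ∑ σ : Conf V q, μ σ = 1)
    (B' : Finset V) (hB'T : Disjoint B' T) (hB'P : Disjoint B' P)
    (u : Conf V q → ℝ) (hu : ∀ σ, 0 ≤ u σ) :
    ∑ ρ : Conf V q, μ ρ * ent (condDist μ B'ᶜ ρ) (fun σ => mean (condDist μ Tᶜ σ) u)
      ≤ ∑ ρ : Conf V q, μ ρ * ent (condDist μ B'ᶜ ρ) u := by
  have main : ∀ ρ : Conf V q,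
      μ ρ * ent (condDist μ B'ᶜ ρ) (fun σ => mean (condDist μ Tᶜ σ) u)
        ≤ μ ρ * (∑ ζ : Conf V q, condDist μ Tᶜ ρ ζ * ent (condDist μ B'ᶜ ζ) u) := by
    intro ρ
    rcases (h0 ρ).lt_or_eq with hρ | hρ
    swap
    · rw [← hρ, zero_mul, zero_mul]
    refine mul_le_mul_of_nonneg_left ?_ (h0 ρ)
    have hswap : ent (condDist μ B'ᶜ ρ) (fun σ => mean (condDist μ Tᶜ σ) u)
        = ent (condDist μ B'ᶜ ρ)
            (fun σ => ∑ ζ ∈ cls Tᶜ ρ, condDist μ Tᶜ ρ ζ * u (ov T ζ σ)) := by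
      apply ent_congr_supp
      intro σ hσ
      obtain ⟨hσag, hσpos⟩ := cond_ne_zero μ h0 hσ
      have hσ' : ∀ v, v ∉ B' → σ v = ρ v := fun v hv => hσag v (Finset.mem_compl.mpr hv)
      rw [mean, sum_cond_mul μ Tᶜ σ u]
      refine Finset.sum_nbij' (fun η => ov T η ρ) (fun η => ov T η σ) ?_ ?_ ?_ ?_ ?_
      · intro η hη
        rw [mem_cls_compl] at hη ⊢
        intro v hv
        exact ov_notmem hv
      · intro η hη
        rw [mem_cls_compl] at hη ⊢
        intro v hv
        exact ov_notmem hv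
      · intro η hη
        rw [mem_cls_compl] at hη
        funext v
        by_cases hvT : v ∈ T
        · simp [ov, hvT]
        · simp only [ov, if_neg hvT]
          exact (hη v hvT).symm
      · intro η hη
        rw [mem_cls_compl] at hη
        funext v
        by_cases hvT : v ∈ T
        · simp [ov, hvT]
        · simp only [ov, if_neg hvT]
          exact (hη v hvT).symm
      · intro η hη
        rw [mem_cls_compl] at hη
        have hη_eq : ov T η σ = η := ov_eq_self hη
        have h1 : ov T (ov T η ρ) σ = η := by
          funext v
          by_cases hvT : v ∈ T
          · simp [ov, hvT]
          · simp only [ov, if_neg hvT]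
            exact (hη v hvT).symm
        have hkey : condDist μ Tᶜ σ η * u η
            = condDist μ Tᶜ ρ (ov T η ρ) * u (ov T (ov T η ρ) σ) := by
          rw [h1]
          congr 1
          conv_lhs => rw [← hη_eq]
          exact weight_const μ T P A B hA0 hB0 hAloc hBloc hABμ h0 B' hB'T hB'P
            hρ hσpos hσ' η
        simpa using hkey
    rw [hswap]
    refine le_trans (ent_jensen (condDist μ B'ᶜ ρ) (cond_nonneg μ h0 B'ᶜ ρ) (cls Tᶜ ρ)
      (fun ζ => condDist μ Tᶜ ρ ζ) (fun ζ σ => u (ov T ζ σ))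
      (fun ζ _ => cond_nonneg μ h0 Tᶜ ρ ζ) (fun ζ _ σ => hu _)) ?_
    have hstep : ∀ ζ ∈ cls Tᶜ ρ,
        condDist μ Tᶜ ρ ζ * ent (condDist μ B'ᶜ ρ) (fun σ => u (ov T ζ σ))
          = condDist μ Tᶜ ρ ζ * ent (condDist μ B'ᶜ ζ) u := by
      intro ζ hζ
      by_cases hz : condDist μ Tᶜ ρ ζ = 0
      · rw [hz, zero_mul, zero_mul]
      · obtain ⟨hζag, hζpos⟩ := cond_ne_zero μ h0 hz
        have hζρ : ∀ v, v ∉ T → ζ v = ρ v := fun v hv => hζag v (Finset.mem_compl.mpr hv)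
        congr 1
        exact ent_transport (ov T ζ) u (fun G =>
          cond_transport μ T P A B hA0 hB0 hAloc hBloc hABμ h0 B' hB'T hB'P
            hρ hζpos hζρ G)
    rw [Finset.sum_congr rfl hstep]
    rw [show (∑ ζ ∈ cls Tᶜ ρ, condDist μ Tᶜ ρ ζ * ent (condDist μ B'ᶜ ζ) u)
        = ∑ ζ : Conf V q, condDist μ Tᶜ ρ ζ * ent (condDist μ B'ᶜ ζ) u from
      Finset.sum_subset (Finset.subset_univ _) fun ζ _ hζ => by
        rw [cond_eq_zero_of_notmem μ hζ, zero_mul]]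
  calc ∑ ρ : Conf V q, μ ρ * ent (condDist μ B'ᶜ ρ) (fun σ => mean (condDist μ Tᶜ σ) u)
      ≤ ∑ ρ : Conf V q, μ ρ * (∑ ζ : Conf V q, condDist μ Tᶜ ρ ζ *
          ent (condDist μ B'ᶜ ζ) u) := Finset.sum_le_sum fun ρ _ => main ρ
    _ = ∑ ζ : Conf V q, μ ζ * ent (condDist μ B'ᶜ ζ) u :=
        exp_tower μ h0 hsum Tᶜ (fun ζ => ent (condDist μ B'ᶜ ζ) u)

end Factor

/-! ### Gibbs factorization across a closed set -/

lemma gibbs_factor {G : SimpleGraph V} (hg : IsGibbs G μ) (T P : Finset V)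
    (hcross : ∀ a b, G.Adj a b → a ∈ T → b ∉ T → b ∈ P) :
    ∃ A B : Conf V q → ℝ, (∀ σ, 0 ≤ A σ) ∧ (∀ σ, 0 ≤ B σ) ∧
      (∀ σ σ', (∀ v ∈ T, σ v = σ' v) → (∀ v ∈ P, σ v = σ' v) → A σ = A σ') ∧
      (∀ σ σ', (∀ v, v ∉ T → σ v = σ' v) → B σ = B σ') ∧
      (∀ σ, μ σ = A σ * B σ) := by
  obtain ⟨ψ, φ, hψ0, hψsym, hφ0, hμ⟩ := hg
  refine ⟨fun σ => (∏ v ∈ T, φ v (σ v)) *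
      ∏ p ∈ (univ.filter (fun p : V × V => G.Adj p.1 p.2)).filter
        (fun p : V × V => p.1 ∈ T ∨ p.2 ∈ T), ψ p.1 p.2 (σ p.1) (σ p.2),
    fun σ => ((∏ v ∈ Tᶜ, φ v (σ v)) *
      ∏ p ∈ (univ.filter (fun p : V × V => G.Adj p.1 p.2)).filter
        (fun p : V × V => ¬(p.1 ∈ T ∨ p.2 ∈ T)), ψ p.1 p.2 (σ p.1) (σ p.2)) /
      ∑ σ' : Conf V q, (∏ v, φ v (σ' v)) *
        ∏ p ∈ univ.filter (fun p : V × V => G.Adj p.1 p.2), ψ p.1 p.2 (σ' p.1) (σ' p.2),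
    ?_, ?_, ?_, ?_, ?_⟩
  · intro σ
    exact mul_nonneg (Finset.prod_nonneg fun v _ => hφ0 v _)
      (Finset.prod_nonneg fun p _ => hψ0 _ _ _ _)
  · intro σ
    refine div_nonneg (mul_nonneg (Finset.prod_nonneg fun v _ => hφ0 v _)
      (Finset.prod_nonneg fun p _ => hψ0 _ _ _ _)) ?_
    exact Finset.sum_nonneg fun σ' _ => mul_nonneg (Finset.prod_nonneg fun v _ => hφ0 v _)
      (Finset.prod_nonneg fun p _ => hψ0 _ _ _ _)
  · intro σ σ' hT hP
    beta_reduce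
    congr 1
    · exact Finset.prod_congr rfl fun v hv => by rw [hT v hv]
    · refine Finset.prod_congr rfl fun p hp => ?_
      rw [Finset.mem_filter] at hp
      obtain ⟨hpE, hpT⟩ := hp
      rw [Finset.mem_filter] at hpE
      have hadj : G.Adj p.1 p.2 := hpE.2
      have h1 : σ p.1 = σ' p.1 := by
        rcases hpT with h | h
        · exact hT _ h
        · by_cases h1T : p.1 ∈ T
          · exact hT _ h1T
          · exact hP _ (hcross p.2 p.1 hadj.symm h h1T)
      have h2 : σ p.2 = σ' p.2 := by
        rcases hpT with h | h
        · by_cases h2T : p.2 ∈ T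
          · exact hT _ h2T
          · exact hP _ (hcross p.1 p.2 hadj h h2T)
        · exact hT _ h
      rw [h1, h2]
  · intro σ σ' hoff
    beta_reduce
    congr 1
    congr 1
    · exact Finset.prod_congr rfl fun v hv => by rw [hoff v (Finset.mem_compl.mp hv)]
    · refine Finset.prod_congr rfl fun p hp => ?_
      rw [Finset.mem_filter] at hp
      obtain ⟨-, hpT⟩ := hp
      push_neg at hpT
      rw [hoff p.1 hpT.1, hoff p.2 hpT.2]
  · intro σ
    beta_reduce
    rw [hμ σ]
    rw [← Finset.prod_mul_prod_compl T (fun v => φ v (σ v)),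
      ← Finset.prod_filter_mul_prod_filter_not
        (univ.filter (fun p : V × V => G.Adj p.1 p.2))
        (fun p : V × V => p.1 ∈ T ∨ p.2 ∈ T) (fun p => ψ p.1 p.2 (σ p.1) (σ p.2))]
    ring

/-! ### Connected components -/

section Components

variable (G : SimpleGraph V)

def grel (S : Finset V) : V → V → Prop := fun a b => a ∈ S ∧ b ∈ S ∧ G.Adj a b

def compOf (S : Finset V) (u : V) : Finset V :=
  S.filter (fun v => Relation.ReflTransGen (grel G S) u v)

lemma mem_compOf_self {S : Finset V} {u : V} (hu : u ∈ S) : u ∈ compOf G S u :=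
  Finset.mem_filter.mpr ⟨hu, Relation.ReflTransGen.refl⟩

lemma compOf_subset (S : Finset V) (u : V) : compOf G S u ⊆ S := Finset.filter_subset _ _

lemma compOf_closed {S : Finset V} {u : V} :
    ∀ x ∈ compOf G S u, ∀ v ∈ S, G.Adj x v → v ∈ compOf G S u := by
  intro x hx v hv hadj
  obtain ⟨hxS, hxr⟩ := Finset.mem_filter.mp hx
  exact Finset.mem_filter.mpr ⟨hv, hxr.tail ⟨hxS, hv, hadj⟩⟩

lemma compOf_conn {S : Finset V} {u : V} (hu : u ∈ S) : ConnWithin G (compOf G S u) := by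
  have upgrade : ∀ y, Relation.ReflTransGen (grel G S) u y →
      Relation.ReflTransGen
        (fun a b => a ∈ compOf G S u ∧ b ∈ compOf G S u ∧ G.Adj a b) u y := by
    intro y hy
    induction hy with
    | refl => exact Relation.ReflTransGen.refl
    | tail h₁ h₂ ih =>
        refine ih.tail ⟨Finset.mem_filter.mpr ⟨h₂.1, h₁⟩,
          Finset.mem_filter.mpr ⟨h₂.2.1, h₁.tail h₂⟩, h₂.2.2⟩
  intro x hx y hy
  have hx' := (Finset.mem_filter.mp hx).2
  have hy' := (Finset.mem_filter.mp hy).2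
  have symT : Symmetric (fun a b => a ∈ compOf G S u ∧ b ∈ compOf G S u ∧ G.Adj a b) :=
    fun a b hab => ⟨hab.2.1, hab.1, hab.2.2.symm⟩
  exact ((@Relation.ReflTransGen.stdSymm _ _ ⟨fun a b h => symT h⟩).symm _ _ (upgrade x hx')).trans (upgrade y hy')

lemma compOf_isComponent {S : Finset V} {u : V} (hu : u ∈ S) :
    IsComponent G S (compOf G S u) :=
  ⟨compOf_subset G S u, ⟨u, mem_compOf_self G hu⟩, compOf_conn G hu, compOf_closed G⟩

lemma compOf_subset_closed {S S' : Finset V} {u : V}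
    (hcl : ∀ a ∈ S', ∀ b ∈ S, G.Adj a b → b ∈ S') (hu : u ∈ S') :
    compOf G S u ⊆ S' := by
  intro x hx
  obtain ⟨hxS, hxr⟩ := Finset.mem_filter.mp hx
  clear hx hxS
  induction hxr with
  | refl => exact hu
  | tail h₁ h₂ ih => exact hcl _ ih _ h₂.2.1 h₂.2.2

end Components

end CompFact

open CompFact in
/-- Entropy factorization through the connected components of `S`:
if on each component `S_i` entropy factorizes into the independent sets with constant
`Γ(S_i)`, then `E_{τ∼μ_{V∖S}}[Ent^τ_S(f^τ)] ≤ (max_i Γ(S_i)) Σ_j E_{τ∼μ_{V∖V_j}}[Ent^τ_{V_j}(f^τ)]`. -/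
theorem component_factorization (n Q : ℕ) (G : SimpleGraph (Fin n))
    (μ : Conf (Fin n) Q → ℝ) (hdist : IsDist μ) (hgibbs : IsGibbs G μ)
    (k : ℕ) (Vj : Fin k → Finset (Fin n))
    (hind : ∀ i, IndepSet G (Vj i))
    (hdisj : ∀ i j, i ≠ j → Disjoint (Vj i) (Vj j))
    (hcover : ∀ v, ∃ i, v ∈ Vj i)
    (S : Finset (Fin n)) (Γ : Finset (Fin n) → ℝ)
    (hΓ : ∀ T, IsComponent G S T →
      ∀ τ : Conf (Fin n) Q, 0 < agreeProb μ Tᶜ τ →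
        ∀ g : Conf (Fin n) Q → ℝ, (∀ σ, 0 ≤ g σ) →
          ent (condDist μ Tᶜ τ) g ≤
            Γ T * ∑ i, ∑ ρ : Conf (Fin n) Q,
              condDist μ Tᶜ τ ρ * ent (condDist μ (T ∩ Vj i)ᶜ ρ) g) :
    ∀ M : ℝ, 0 ≤ M → (∀ T, IsComponent G S T → Γ T ≤ M) →
      ∀ f : Conf (Fin n) Q → ℝ, (∀ σ, 0 ≤ f σ) →
        blockEnt μ S f ≤ M * ∑ i, blockEnt μ (Vj i) f := by
  intro M hM0 hMle f hf
  obtain ⟨h0, hsum⟩ := hdist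
  have key : ∀ S' : Finset (Fin n), S' ⊆ S →
      (∀ a ∈ S', ∀ b ∈ S, G.Adj a b → b ∈ S') →
      ∀ g : Conf (Fin n) Q → ℝ, (∀ σ, 0 ≤ g σ) →
      ∑ ρ : Conf (Fin n) Q, μ ρ * ent (condDist μ S'ᶜ ρ) g
        ≤ M * ∑ i, ∑ ρ : Conf (Fin n) Q, μ ρ * ent (condDist μ (S' ∩ Vj i)ᶜ ρ) g := by
    intro S'
    induction S' using Finset.strongInductionOn with
    | _ S' IH =>
    intro hS'S hcl g hg
    rcases Finset.eq_empty_or_nonempty S' with rfl | hne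
    · have hL : (∑ ρ : Conf (Fin n) Q,
          μ ρ * ent (condDist μ (∅ : Finset (Fin n))ᶜ ρ) g) = 0 :=
        Finset.sum_eq_zero fun ρ _ => by
          rcases (h0 ρ).lt_or_eq with hρ | hρ
          · rw [Finset.compl_empty, ent_cond_univ μ h0 hρ g, mul_zero]
          · rw [← hρ, zero_mul]
      rw [hL]
      exact mul_nonneg hM0 (Finset.sum_nonneg fun i _ => Finset.sum_nonneg fun ρ _ =>
        mul_nonneg (h0 ρ) (ent_cond_nonneg μ h0 _ ρ hg))
    · obtain ⟨u, hu⟩ := hne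
      have huS : u ∈ S := hS'S hu
      have hTcomp : IsComponent G S (compOf G S u) := compOf_isComponent G huS
      have hTS' : compOf G S u ⊆ S' := compOf_subset_closed G hcl hu
      have hssub : S' \ compOf G S u ⊂ S' :=
        Finset.sdiff_ssubset hTS' ⟨u, mem_compOf_self G huS⟩
      have hS''S : S' \ compOf G S u ⊆ S := fun x hx => hS'S (Finset.mem_sdiff.mp hx).1
      have hS''cl : ∀ a ∈ S' \ compOf G S u, ∀ b ∈ S, G.Adj a b →
          b ∈ S' \ compOf G S u := by
        intro a ha b hb hadj
        obtain ⟨haS', haT⟩ := Finset.mem_sdiff.mp ha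
        refine Finset.mem_sdiff.mpr ⟨hcl a haS' b hb hadj, fun hbT => ?_⟩
        exact haT (compOf_closed G b hbT a (hS'S haS') hadj.symm)
      have hcross : ∀ a b : Fin n, G.Adj a b → a ∈ compOf G S u → b ∉ compOf G S u →
          b ∈ S'ᶜ := by
        intro a b hadj haT hbT
        rw [Finset.mem_compl]
        exact fun hbS' => hbT (compOf_closed G a haT b (hS'S hbS') hadj)
      obtain ⟨A, B, hA0, hB0, hAloc, hBloc, hABμ⟩ :=
        gibbs_factor μ hgibbs (compOf G S u) S'ᶜ hcross
      set T := compOf G S u with hTdef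
      have hTP : Disjoint T S'ᶜ := disjoint_compl_right.mono_left hTS'
      have hsubTc : S'ᶜ ⊆ Tᶜ := Finset.compl_subset_compl.mpr hTS'
      have hh0 : ∀ σ : Conf (Fin n) Q, 0 ≤ mean (condDist μ Tᶜ σ) g := fun σ =>
        mean_nonneg (cond_nonneg μ h0 Tᶜ σ) hg
      have hhloc : ∀ σ σ' : Conf (Fin n) Q, (∀ v, v ∉ T → σ v = σ' v) →
          mean (condDist μ Tᶜ σ) g = mean (condDist μ Tᶜ σ') g := by
        intro σ σ' hss
        rw [cond_congr μ (fun v hv => hss v (Finset.mem_compl.mp hv))]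
      have step1 : ∑ ρ : Conf (Fin n) Q, μ ρ * ent (condDist μ S'ᶜ ρ) g
          = (∑ ρ : Conf (Fin n) Q, μ ρ * ent (condDist μ Tᶜ ρ) g)
            + ∑ ρ : Conf (Fin n) Q, μ ρ * ent (condDist μ S'ᶜ ρ)
                (fun σ => mean (condDist μ Tᶜ σ) g) := by
        rw [Finset.sum_congr rfl (fun ρ (_ : ρ ∈ (univ : Finset (Conf (Fin n) Q))) => by
            rw [chain_rule μ h0 hsubTc ρ g, mul_add]),
          Finset.sum_add_distrib,
          exp_tower μ h0 hsum S'ᶜ (fun ρ' => ent (condDist μ Tᶜ ρ') g)]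
      have step2 : (∑ ρ : Conf (Fin n) Q, μ ρ * ent (condDist μ Tᶜ ρ) g)
          ≤ M * ∑ i, ∑ ρ : Conf (Fin n) Q, μ ρ * ent (condDist μ (T ∩ Vj i)ᶜ ρ) g := by
        have per : ∀ ρ : Conf (Fin n) Q, μ ρ * ent (condDist μ Tᶜ ρ) g
            ≤ μ ρ * (M * ∑ i, ∑ ρ' : Conf (Fin n) Q,
                condDist μ Tᶜ ρ ρ' * ent (condDist μ (T ∩ Vj i)ᶜ ρ') g) := by
          intro ρ
          rcases (h0 ρ).lt_or_eq with hρ | hρ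
          · refine mul_le_mul_of_nonneg_left ?_ (h0 ρ)
            have hin : (0:ℝ) ≤ ∑ i, ∑ ρ' : Conf (Fin n) Q,
                condDist μ Tᶜ ρ ρ' * ent (condDist μ (T ∩ Vj i)ᶜ ρ') g :=
              Finset.sum_nonneg fun i _ => Finset.sum_nonneg fun ρ' _ =>
                mul_nonneg (cond_nonneg μ h0 _ _ _) (ent_cond_nonneg μ h0 _ _ hg)
            exact le_trans (hΓ T hTcomp ρ (agree_pos μ h0 _ hρ) g hg)
              (mul_le_mul_of_nonneg_right (hMle T hTcomp) hin)
          · rw [← hρ, zero_mul, zero_mul]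
        refine le_trans (Finset.sum_le_sum fun ρ _ => per ρ) (le_of_eq ?_)
        calc ∑ ρ : Conf (Fin n) Q, μ ρ * (M * ∑ i, ∑ ρ' : Conf (Fin n) Q,
              condDist μ Tᶜ ρ ρ' * ent (condDist μ (T ∩ Vj i)ᶜ ρ') g)
            = ∑ ρ : Conf (Fin n) Q, ∑ i, M * (μ ρ * ∑ ρ' : Conf (Fin n) Q,
                condDist μ Tᶜ ρ ρ' * ent (condDist μ (T ∩ Vj i)ᶜ ρ') g) :=
              Finset.sum_congr rfl fun ρ _ => by
                rw [Finset.mul_sum, Finset.mul_sum]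
                exact Finset.sum_congr rfl fun i _ => by ring
          _ = ∑ i, ∑ ρ : Conf (Fin n) Q, M * (μ ρ * ∑ ρ' : Conf (Fin n) Q,
                condDist μ Tᶜ ρ ρ' * ent (condDist μ (T ∩ Vj i)ᶜ ρ') g) :=
              Finset.sum_comm
          _ = M * ∑ i, ∑ ρ : Conf (Fin n) Q, μ ρ * ∑ ρ' : Conf (Fin n) Q,
                condDist μ Tᶜ ρ ρ' * ent (condDist μ (T ∩ Vj i)ᶜ ρ') g := by
              rw [Finset.mul_sum]
              exact Finset.sum_congr rfl fun i _ => (Finset.mul_sum _ _ _).symm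
          _ = M * ∑ i, ∑ ρ' : Conf (Fin n) Q,
                μ ρ' * ent (condDist μ (T ∩ Vj i)ᶜ ρ') g := by
              congr 1
              exact Finset.sum_congr rfl fun i _ =>
                exp_tower μ h0 hsum Tᶜ (fun ρ' => ent (condDist μ (T ∩ Vj i)ᶜ ρ') g)
      have hcomplS'' : (S' \ T)ᶜ = S'ᶜ ∪ T := by
        ext v
        simp only [Finset.mem_compl, Finset.mem_sdiff, Finset.mem_union]
        tauto
      have step3 : ∑ ρ : Conf (Fin n) Q, μ ρ * ent (condDist μ S'ᶜ ρ)
            (fun σ => mean (condDist μ Tᶜ σ) g)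
          = ∑ ρ : Conf (Fin n) Q, μ ρ * ent (condDist μ (S' \ T)ᶜ ρ)
            (fun σ => mean (condDist μ Tᶜ σ) g) := by
        refine Finset.sum_congr rfl fun ρ _ => ?_
        rcases (h0 ρ).lt_or_eq with hρ | hρ
        · rw [hcomplS'',
            cond_union_ent μ T S'ᶜ A B hA0 hB0 hAloc hBloc hABμ h0 hTP hρ
              (fun σ => mean (condDist μ Tᶜ σ) g) hhloc]
        · rw [← hρ, zero_mul, zero_mul]
      have step4 : ∑ ρ : Conf (Fin n) Q, μ ρ * ent (condDist μ (S' \ T)ᶜ ρ)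
            (fun σ => mean (condDist μ Tᶜ σ) g)
          ≤ M * ∑ i, ∑ ρ : Conf (Fin n) Q, μ ρ * ent (condDist μ ((S' \ T) ∩ Vj i)ᶜ ρ)
            (fun σ => mean (condDist μ Tᶜ σ) g) :=
        IH (S' \ T) hssub hS''S hS''cl _ hh0
      have step5 : ∀ i, (∑ ρ : Conf (Fin n) Q, μ ρ * ent (condDist μ (T ∩ Vj i)ᶜ ρ) g)
            + (∑ ρ : Conf (Fin n) Q, μ ρ * ent (condDist μ ((S' \ T) ∩ Vj i)ᶜ ρ)
                (fun σ => mean (condDist μ Tᶜ σ) g))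
          ≤ ∑ ρ : Conf (Fin n) Q, μ ρ * ent (condDist μ (S' ∩ Vj i)ᶜ ρ) g := by
        intro i
        have hg20 : ∀ σ : Conf (Fin n) Q,
            0 ≤ mean (condDist μ (T ∩ Vj i)ᶜ σ) g := fun σ =>
          mean_nonneg (cond_nonneg μ h0 _ σ) hg
        have hsub1 : (S' ∩ Vj i)ᶜ ⊆ (T ∩ Vj i)ᶜ :=
          Finset.compl_subset_compl.mpr
            (Finset.inter_subset_inter hTS' (Finset.Subset.refl _))
        have hZdecomp : ∑ ρ : Conf (Fin n) Q, μ ρ * ent (condDist μ (S' ∩ Vj i)ᶜ ρ) g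
            = (∑ ρ : Conf (Fin n) Q, μ ρ * ent (condDist μ (T ∩ Vj i)ᶜ ρ) g)
              + ∑ ρ : Conf (Fin n) Q, μ ρ * ent (condDist μ (S' ∩ Vj i)ᶜ ρ)
                  (fun σ => mean (condDist μ (T ∩ Vj i)ᶜ σ) g) := by
          rw [Finset.sum_congr rfl (fun ρ (_ : ρ ∈ (univ : Finset (Conf (Fin n) Q))) => by
              rw [chain_rule μ h0 hsub1 ρ g, mul_add]),
            Finset.sum_add_distrib,
            exp_tower μ h0 hsum (S' ∩ Vj i)ᶜ
              (fun ρ' => ent (condDist μ (T ∩ Vj i)ᶜ ρ') g)]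
        have hmono : ∑ ρ : Conf (Fin n) Q, μ ρ * ent (condDist μ ((S' \ T) ∩ Vj i)ᶜ ρ)
              (fun σ => mean (condDist μ (T ∩ Vj i)ᶜ σ) g)
            ≤ ∑ ρ : Conf (Fin n) Q, μ ρ * ent (condDist μ (S' ∩ Vj i)ᶜ ρ)
              (fun σ => mean (condDist μ (T ∩ Vj i)ᶜ σ) g) :=
          sum_ent_mono μ h0 hsum
            (Finset.compl_subset_compl.mpr
              (Finset.inter_subset_inter Finset.sdiff_subset (Finset.Subset.refl _)))
            hg20
        have hhg2 : (fun σ : Conf (Fin n) Q => mean (condDist μ Tᶜ σ) g)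
            = fun σ => mean (condDist μ Tᶜ σ)
                (fun σ' => mean (condDist μ (T ∩ Vj i)ᶜ σ') g) := by
          funext σ
          rw [show mean (condDist μ Tᶜ σ)
              (fun σ' => mean (condDist μ (T ∩ Vj i)ᶜ σ') g)
              = ∑ ρ : Conf (Fin n) Q, condDist μ Tᶜ σ ρ *
                  mean (condDist μ (T ∩ Vj i)ᶜ ρ) g from rfl]
          exact (mean_tower μ h0
            (Finset.compl_subset_compl.mpr Finset.inter_subset_left) σ g).symm
        have hproj : ∑ ρ : Conf (Fin n) Q, μ ρ * ent (condDist μ ((S' \ T) ∩ Vj i)ᶜ ρ)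
              (fun σ => mean (condDist μ Tᶜ σ) g)
            ≤ ∑ ρ : Conf (Fin n) Q, μ ρ * ent (condDist μ ((S' \ T) ∩ Vj i)ᶜ ρ)
              (fun σ => mean (condDist μ (T ∩ Vj i)ᶜ σ) g) := by
          rw [hhg2]
          exact proj_le μ T S'ᶜ A B hA0 hB0 hAloc hBloc hABμ h0 hsum
            ((S' \ T) ∩ Vj i)
            (Finset.sdiff_disjoint.mono_left Finset.inter_subset_left)
            (disjoint_compl_right.mono_left
              (Finset.inter_subset_left.trans Finset.sdiff_subset))
            (fun σ' => mean (condDist μ (T ∩ Vj i)ᶜ σ') g) hg20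
        linarith [hZdecomp, hmono, hproj]
      calc ∑ ρ : Conf (Fin n) Q, μ ρ * ent (condDist μ S'ᶜ ρ) g
          = (∑ ρ : Conf (Fin n) Q, μ ρ * ent (condDist μ Tᶜ ρ) g)
            + ∑ ρ : Conf (Fin n) Q, μ ρ * ent (condDist μ (S' \ T)ᶜ ρ)
                (fun σ => mean (condDist μ Tᶜ σ) g) := by rw [step1, step3]
        _ ≤ (M * ∑ i, ∑ ρ : Conf (Fin n) Q, μ ρ * ent (condDist μ (T ∩ Vj i)ᶜ ρ) g)
            + M * ∑ i, ∑ ρ : Conf (Fin n) Q, μ ρ * ent (condDist μ ((S' \ T) ∩ Vj i)ᶜ ρ)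
                (fun σ => mean (condDist μ Tᶜ σ) g) := add_le_add step2 step4
        _ = M * ∑ i, ((∑ ρ : Conf (Fin n) Q, μ ρ * ent (condDist μ (T ∩ Vj i)ᶜ ρ) g)
            + ∑ ρ : Conf (Fin n) Q, μ ρ * ent (condDist μ ((S' \ T) ∩ Vj i)ᶜ ρ)
                (fun σ => mean (condDist μ Tᶜ σ) g)) := by
              rw [← mul_add, ← Finset.sum_add_distrib]
        _ ≤ M * ∑ i, ∑ ρ : Conf (Fin n) Q, μ ρ * ent (condDist μ (S' ∩ Vj i)ᶜ ρ) g :=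
              mul_le_mul_of_nonneg_left (Finset.sum_le_sum fun i _ => step5 i) hM0
  have hkey := key S (Finset.Subset.refl S) (fun a _ b hb _ => hb) f hf
  calc blockEnt μ S f
      = ∑ ρ : Conf (Fin n) Q, μ ρ * ent (condDist μ Sᶜ ρ) f := rfl
    _ ≤ M * ∑ i, ∑ ρ : Conf (Fin n) Q, μ ρ * ent (condDist μ (S ∩ Vj i)ᶜ ρ) f := hkey
    _ ≤ M * ∑ i, blockEnt μ (Vj i) f := by
        refine mul_le_mul_of_nonneg_left (Finset.sum_le_sum fun i _ => ?_) hM0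
        exact sum_ent_mono μ h0 hsum
          (Finset.compl_subset_compl.mpr Finset.inter_subset_right) hf
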